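/- arXiv:1810.07166 — 5 statements merged into one kernel-verified Lean document; each statement's English description precedes it below -/
import Mathlib

section
/- Let s ≥ 5 be an integer, k an integer with 1 ≤ k ≤ 4s, and let r and σ be positive integers such that r > k/(2s), σ > k/4, and r·σ < k²/(8s) + 1. Then r = ⌊k/(2s)⌋ + 1 and σ = ⌊k/4⌋ + 1, i.e. r is the smallest integer strictly greater than k/(2s) and σ is the smallest integer strictly greater than k/4. -/
theorem stmt_1 (s k : ℤ) (r σ : ℤ) (hs : 5 ≤ s)
    (hk1 : 1 ≤ k) (hk2 : k ≤ 4 * s)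
    (hr0 : 0 < r) (hσ0 : 0 < σ)
    (hr : (k : ℚ) / (2 * s) < (r : ℚ))
    (hσ : (k : ℚ) / 4 < (σ : ℚ))
    (hrσ : (r : ℚ) * (σ : ℚ) < (k : ℚ) ^ 2 / (8 * s) + 1) :
    r = ⌊(k : ℚ) / (2 * s)⌋ + 1 ∧ σ = ⌊(k : ℚ) / 4⌋ + 1 := by
  have hsQ : (5:ℚ) ≤ (s:ℚ) := by exact_mod_cast hs
  have hkQ : (1:ℚ) ≤ (k:ℚ) := by exact_mod_cast hk1
  have hk2Q : (k:ℚ) ≤ 4 * (s:ℚ) := by exact_mod_cast hk2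
  set x : ℚ := (k:ℚ)/(2*s) with hxdef
  set y : ℚ := (k:ℚ)/4 with hydef
  have hsQpos : (0:ℚ) < (s:ℚ) := by linarith
  have hx0 : 0 < x := by rw [hxdef]; positivity
  have hy0 : 0 < y := by rw [hydef]; positivity
  -- lower bounds
  have hrge : ⌊x⌋ + 1 ≤ r := by
    have h1 : (⌊x⌋:ℚ) < (r:ℚ) := lt_of_le_of_lt (Int.floor_le x) hr
    have : ⌊x⌋ < r := by exact_mod_cast h1
    omega
  have hσge : ⌊y⌋ + 1 ≤ σ := by
    have h1 : (⌊y⌋:ℚ) < (σ:ℚ) := lt_of_le_of_lt (Int.floor_le y) hσ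
    have : ⌊y⌋ < σ := by exact_mod_cast h1
    omega
  have hxy : x * y = (k:ℚ)^2/(8*s) := by
    rw [hxdef, hydef]; field_simp; ring
  -- upper bound for r
  have hrle : r ≤ ⌊x⌋ + 1 := by
    by_contra h
    push_neg at h
    have h2 : ⌊x⌋ + 2 ≤ r := by omega
    have h2Q : (⌊x⌋:ℚ) + 2 ≤ (r:ℚ) := by exact_mod_cast h2
    have hrx : x + 1 < (r:ℚ) := by
      have := Int.lt_floor_add_one x
      linarith
    rcases le_or_gt 4 k with hk4 | hk4
    · have hy1 : (1:ℚ) ≤ y := by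
        rw [hydef]
        rw [le_div_iff₀ (by norm_num)]
        norm_num
        exact_mod_cast hk4
      have hmul : (x+1) * y < (r:ℚ) * (σ:ℚ) :=
        mul_lt_mul'' hrx hσ (by linarith) (by linarith)
      nlinarith [hmul, hxy, hy1, hrσ]
    · -- k ≤ 3
      have hk3Q : (k:ℚ) ≤ 3 := by exact_mod_cast by omega
      have hsmall : (k:ℚ)^2/(8*s) < 1 := by
        rw [div_lt_one (by positivity)]
        nlinarith
      have hfx : ⌊x⌋ = 0 := by
        apply Int.floor_eq_zero_iff.mpr
        constructor
        · linarith
        · rw [hxdef, div_lt_one (by positivity)]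
          linarith
      have hr2 : (2:ℤ) ≤ r := by omega
      have hr2Q : (2:ℚ) ≤ (r:ℚ) := by exact_mod_cast hr2
      have hσ1Q : (1:ℚ) ≤ (σ:ℚ) := by exact_mod_cast hσ0
      nlinarith [hrσ, hsmall, hr2Q, hσ1Q]
  -- upper bound for σ
  have hσle : σ ≤ ⌊y⌋ + 1 := by
    by_contra h
    push_neg at h
    have h2 : ⌊y⌋ + 2 ≤ σ := by omega
    have h2Q : (⌊y⌋:ℚ) + 2 ≤ (σ:ℚ) := by exact_mod_cast h2
    have hσy : y + 1 < (σ:ℚ) := by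
      have := Int.lt_floor_add_one y
      linarith
    rcases le_or_gt (2*s) k with hks | hks
    · have hx1 : (1:ℚ) ≤ x := by
        rw [hxdef, le_div_iff₀ (by positivity)]
        have : (2:ℚ) * s ≤ (k:ℚ) := by exact_mod_cast hks
        linarith
      have hmul : x * (y+1) < (r:ℚ) * (σ:ℚ) :=
        mul_lt_mul'' hr hσy (by linarith) (by linarith)
      nlinarith [hmul, hxy, hx1, hrσ]
    · -- k < 2s : x < 1, so y > x*y
      have hksQ : (k:ℚ) < 2 * s := by exact_mod_cast hks
      have hylt : (k:ℚ)^2/(8*s) < y := by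
        rw [hydef, div_lt_div_iff₀ (by positivity) (by norm_num)]
        nlinarith
      have hr1Q : (1:ℚ) ≤ (r:ℚ) := by exact_mod_cast hr0
      have hσpos : (0:ℚ) < (σ:ℚ) := by exact_mod_cast hσ0
      have : (σ:ℚ) ≤ (r:ℚ) * (σ:ℚ) := le_mul_of_one_le_left (le_of_lt hσpos) hr1Q
      linarith
  exact ⟨by omega, by omega⟩
end

section
/- Let s ≥ 5 be an odd integer, and let a, b be integers with 1 ≤ a ≤ 4, 1 ≤ b ≤ 2s, b ≡ a + 2 (mod 4), a·s > 4b, and b² − 2bs + 2(4 − a)s > 0. Then (a, b) = (3, 1) or (a, b) = (1, 3). -/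
theorem stmt_3 (s a b : ℤ) (hs : 5 ≤ s) (hsodd : Odd s)
    (ha1 : 1 ≤ a) (ha4 : a ≤ 4) (hb1 : 1 ≤ b) (hb2 : b ≤ 2 * s)
    (hcong : b ≡ a + 2 [ZMOD 4]) (hslope : 4 * b < a * s)
    (hineq : 0 < b ^ 2 - 2 * b * s + 2 * (4 - a) * s) :
    (a = 3 ∧ b = 1) ∨ (a = 1 ∧ b = 3) := by
  have h4 : b % 4 = (a + 2) % 4 := hcong
  interval_cases a
  · -- a = 1 : b ≡ 3 [4]
    have hb : b = 3 ∨ 7 ≤ b := by omega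
    rcases hb with h | h
    · right; exact ⟨rfl, h⟩
    · exfalso
      nlinarith [mul_pos (show (0:ℤ) < b - 3 by omega) (show (0:ℤ) < s - 4 * b by linarith)]
  · -- a = 2 : b ≡ 0 [4]
    exfalso
    have hb : 4 ≤ b := by omega
    nlinarith [mul_pos (show (0:ℤ) < b - 2 by omega) (show (0:ℤ) < 2 * s - 4 * b by linarith)]
  · -- a = 3 : b ≡ 1 [4]
    have hb : b = 1 ∨ 5 ≤ b := by omega
    rcases hb with h | h
    · left; exact ⟨rfl, h⟩
    · exfalso
      nlinarith [mul_pos (show (0:ℤ) < b - 1 by omega) (show (0:ℤ) < 3 * s - 4 * b by linarith)]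
  · -- a = 4
    exfalso
    nlinarith [mul_nonneg (show (0:ℤ) ≤ b - 1 by omega) (show (0:ℤ) ≤ 2 * s - b by omega)]
end

section
/- Let s ≥ 6 be an even integer, and let k, a, b be integers with 1 ≤ a ≤ 4, 1 ≤ b ≤ 2s, 1 ≤ k ≤ 4s, k ≡ −a (mod 4), k ≡ −b (mod 2s), a·s > 4b, and (k + a)(k + b) < k² + 8s. Then (k, a, b) is one of (4s − 1, 1, 1), (2s − 1, 1, 1), (2s − 2, 2, 2). -/
theorem stmt_4 (s k a b : ℤ) (hs : 6 ≤ s) (hsev : Even s)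
    (ha1 : 1 ≤ a) (ha4 : a ≤ 4) (hb1 : 1 ≤ b) (hb2 : b ≤ 2 * s)
    (hk1 : 1 ≤ k) (hk2 : k ≤ 4 * s)
    (hcong4 : k ≡ -a [ZMOD 4]) (hcong2s : k ≡ -b [ZMOD (2 * s)])
    (hslope : 4 * b < a * s)
    (hineq : (k + a) * (k + b) < k ^ 2 + 8 * s) :
    (k = 4 * s - 1 ∧ a = 1 ∧ b = 1) ∨
    (k = 2 * s - 1 ∧ a = 1 ∧ b = 1) ∨
    (k = 2 * s - 2 ∧ a = 2 ∧ b = 2) := by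
  have h8 : k * a + k * b + a * b < 8 * s := by nlinarith [hineq]
  have hbs : 4 * b < 4 * s := by nlinarith [hslope]
  obtain ⟨m, hm⟩ := hcong2s.dvd
  obtain ⟨q, hq⟩ := hcong4.dvd
  obtain ⟨u, hu⟩ := hsev
  have hm1 : -3 ≤ m := by nlinarith
  have hm2 : m ≤ -1 := by nlinarith
  interval_cases m
  · -- k + b = 6s
    exfalso; nlinarith
  · -- k + b = 4s
    have hab : a + b ≤ 2 := by nlinarith
    have h1 : a = 1 ∧ b = 1 := by omega
    obtain ⟨rfl, rfl⟩ := h1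
    left; omega
  · -- k + b = 2s
    have hab : a + b ≤ 7 := by nlinarith
    have hcases : (a = 1 ∧ b = 1) ∨ (a = 2 ∧ b = 2) ∨ (a = 3 ∧ b = 3) ∨ (a = 1 ∧ b = 5) := by
      omega
    rcases hcases with ⟨rfl, rfl⟩ | ⟨rfl, rfl⟩ | ⟨rfl, rfl⟩ | ⟨rfl, rfl⟩
    · right; left; omega
    · right; right; omega
    · exfalso; omega
    · exfalso; omega
end

section
/- Let s ≥ 5 be an odd integer, and let k, a, b be integers with 1 ≤ a ≤ 4, 1 ≤ b ≤ 2s, 1 ≤ k ≤ 4s, k ≡ −a (mod 4), k ≡ −b (mod 2s), a·s > 4b, and (k + a)(k + b) < k² + 8s. Then (k, a, b) is one of (4s − 1, 1, 1), (2s − 1, 3, 1), (2s − 3, 1, 3). -/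
theorem stmt_5 (s k a b : ℤ) (hs : 5 ≤ s) (hsodd : Odd s)
    (ha1 : 1 ≤ a) (ha4 : a ≤ 4) (hb1 : 1 ≤ b) (hb2 : b ≤ 2 * s)
    (hk1 : 1 ≤ k) (hk2 : k ≤ 4 * s)
    (hcong4 : k ≡ -a [ZMOD 4]) (hcong2s : k ≡ -b [ZMOD (2 * s)])
    (hslope : 4 * b < a * s)
    (hineq : (k + a) * (k + b) < k ^ 2 + 8 * s) :
    (k = 4 * s - 1 ∧ a = 1 ∧ b = 1) ∨
    (k = 2 * s - 1 ∧ a = 3 ∧ b = 1) ∨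
    (k = 2 * s - 3 ∧ a = 1 ∧ b = 3) := by
  obtain ⟨t, ht⟩ := hsodd
  have h4 : (4:ℤ) ∣ k + a := by
    have := Int.ModEq.dvd hcong4
    omega
  have key : a * k + b * k + a * b < 8 * s := by nlinarith [hineq]
  obtain ⟨m, hm⟩ := Int.ModEq.dvd hcong2s
  -- hm : -b - k = 2 * s * m
  have hm1 : m ≤ -1 := by
    by_contra h
    push_neg at h
    have h0 : 0 ≤ m := by omega
    have : 0 ≤ 2 * s * m := mul_nonneg (by linarith) h0
    omega
  have hm3 : -3 ≤ m := by
    by_contra h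
    push_neg at h
    have h4m : m ≤ -4 := by omega
    have : 2 * s * m ≤ 2 * s * (-4) := by
      apply mul_le_mul_of_nonneg_left h4m (by linarith)
    omega
  interval_cases m
  · -- k + b = 6 * s : impossible
    have hk : k = 4 * s ∧ b = 2 * s := by constructor <;> omega
    obtain ⟨hk', hb'⟩ := hk
    subst hk' hb'
    nlinarith
  · -- k + b = 4 * s
    have hk : k = 4 * s - b := by omega
    have hab : a + b ≤ 3 := by nlinarith [mul_le_mul_of_nonneg_left (show 2*s ≤ k by omega) (show (0:ℤ) ≤ a + b by omega)]
    have hb2' : b ≤ 2 := by omega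
    interval_cases a <;> interval_cases b <;> omega
  · -- k + b = 2 * s
    have hk : k = 2 * s - b := by omega
    have hbs : b < s := by nlinarith
    have hab : a + b ≤ 7 := by
      by_contra h
      push_neg at h
      nlinarith [mul_le_mul_of_nonneg_left (show s + 1 ≤ k by omega) (show (0:ℤ) ≤ a + b by omega)]
    have hb6 : b ≤ 6 := by omega
    interval_cases a <;> interval_cases b <;> omega
end

section
/- Let s ≥ 5 be an integer, and let α, β be real numbers with α > 0, β > 0, such that (s − 2)β ∈ ℤ, 4sβ ∈ ℤ, and r := α + 2β is a (positive) integer. Then α(r + sβ) > 1, i.e. α(α + 2β + sβ) > 1. -/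
lemma stmt_7_key (a b m s r : ℤ) (ha : 1 ≤ a) (hb : 1 ≤ b) (hm : 1 ≤ m)
    (hs : 5 ≤ s) (hr : a + b = 4 * r) (hrel : b * (s - 2) = 8 * m) :
    16 < a * (a + 2 * b + 4 * m) := by
  rcases le_or_gt 3 a with h3 | h3
  · nlinarith
  · interval_cases a
    · -- a = 1, so b ≡ 3 [MOD 4]
      have hb3 : 3 ≤ b := by omega
      rcases eq_or_lt_of_le hb3 with h | h
      · rw [← h] at hrel
        have hm3 : 3 ≤ m := by omega
        nlinarith
      · have hb7 : 7 ≤ b := by omega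
        have hm3 : 3 ≤ m := by nlinarith
        nlinarith
    · -- a = 2, so b ≡ 2 [MOD 4]
      have hb2 : 2 ≤ b := by omega
      nlinarith

theorem stmt_7 (s : ℤ) (hs : 5 ≤ s) (α β : ℝ)
    (hα : 0 < α) (hβ : 0 < β)
    (h1 : ∃ m : ℤ, ((s : ℝ) - 2) * β = m)
    (h2 : ∃ n : ℤ, 4 * (s : ℝ) * β = n)
    (h3 : ∃ r : ℤ, α + 2 * β = r) :
    α * (α + 2 * β + (s : ℝ) * β) > 1 := by
  obtain ⟨m, hm⟩ := h1
  obtain ⟨n, hn⟩ := h2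
  obtain ⟨r, hr⟩ := h3
  set b : ℤ := n - 4 * m with hbdef
  set a : ℤ := 4 * r - b with hadef
  have hbR : (b : ℝ) = 8 * β := by
    have h : (b:ℝ) = (n:ℝ) - 4 * (m:ℝ) := by push_cast [hbdef]; ring
    rw [h, ← hn, ← hm]; ring
  have haR : (a : ℝ) = 4 * α := by
    have h : (a:ℝ) = 4 * (r:ℝ) - (b:ℝ) := by push_cast [hadef]; ring
    rw [h, hbR, ← hr]; ring
  have hb1 : 1 ≤ b := by
    have h0 : (0:ℝ) < (b:ℝ) := by rw [hbR]; linarith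
    have : (0:ℤ) < b := by exact_mod_cast h0
    omega
  have ha1 : 1 ≤ a := by
    have h0 : (0:ℝ) < (a:ℝ) := by rw [haR]; linarith
    have : (0:ℤ) < a := by exact_mod_cast h0
    omega
  have hm1 : 1 ≤ m := by
    have h0 : (0:ℝ) < (m:ℝ) := by
      rw [← hm]
      have : (5:ℝ) ≤ (s:ℝ) := by exact_mod_cast hs
      nlinarith
    have : (0:ℤ) < m := by exact_mod_cast h0
    omega
  have hrel : b * (s - 2) = 8 * m := by
    have : (b:ℝ) * ((s:ℝ) - 2) = 8 * (m:ℝ) := by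
      rw [hbR, ← hm]; ring
    exact_mod_cast this
  have hkey : 16 < a * (a + 2 * b + 4 * m) := stmt_7_key a b m s r ha1 hb1 hm1 hs (by omega) hrel
  have hkeyR : (16:ℝ) < (a:ℝ) * ((a:ℝ) + 2 * (b:ℝ) + 4 * (m:ℝ)) := by exact_mod_cast hkey
  rw [haR, hbR, ← hm] at hkeyR
  nlinarith [hkeyR]
end
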